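/- Let Γ be a finite simple graph with adjacency matrix A that is 1-walk-regular, i.e. for every natural number ℓ there exist constants a_ℓ and b_ℓ such that (A^ℓ)_{xx} = a_ℓ for every vertex x and (A^ℓ)_{xy} = b_ℓ for every pair of adjacent vertices x, y. If Γ contains a regular clique, then Γ is a strongly regular graph. -/

import Mathlib

open scoped Classical
open Matrix

variable {V : Type*}

/-- `G` is edge-regular with parameters `(v, k, l)`: it has `v` vertices, every vertex has
degree `k`, and every pair of adjacent vertices has exactly `l` common neighbours. -/
def IsEdgeRegular [Fintype V] (G : SimpleGraph V) (v k l : ℕ) : Prop :=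
  Fintype.card V = v ∧ G.IsRegularOfDegree k ∧
    ∀ x y : V, G.Adj x y → Fintype.card (G.commonNeighbors x y) = l

/-- `C` is an `e`-regular clique of `G` (for `e > 0`): a clique such that every vertex
outside `C` is adjacent to exactly `e` vertices of `C`. -/
def IsRegularCliqueWith [Fintype V] (G : SimpleGraph V) (C : Finset V) (e : ℕ) : Prop :=
  G.IsClique ↑C ∧ 0 < e ∧ ∀ x : V, x ∉ C → (C.filter (fun y => G.Adj x y)).card = e

/-- A Neumaier graph: a non-complete edge-regular graph containing a regular clique. -/
def IsNeumaier [Fintype V] (G : SimpleGraph V) : Prop :=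
  (∃ v k l : ℕ, IsEdgeRegular G v k l) ∧ G ≠ ⊤ ∧ ∃ (C : Finset V) (e : ℕ), IsRegularCliqueWith G C e

/-- A graph is complete multipartite when non-adjacency (together with equality) is
a transitive relation on the vertices. -/
def IsCompleteMultipartite (G : SimpleGraph V) : Prop :=
  ∀ x y z : V, ¬G.Adj x y → ¬G.Adj y z → ¬G.Adj x z

/-- `θ` is a (real) eigenvalue of the adjacency matrix of `G`. -/
def IsAdjEigenvalue [Fintype V] (G : SimpleGraph V) (θ : ℝ) : Prop :=
  ∃ f : V → ℝ, f ≠ 0 ∧ G.adjMatrix ℝ *ᵥ f = θ • f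

/-- The average, over all edges of `G`, of the number of common neighbours of the
two endpoints of the edge. -/
noncomputable def avgLambda [Fintype V] (G : SimpleGraph V) : ℝ :=
  (∑ ed ∈ G.edgeFinset, Sym2.lift
      ⟨fun x y => ((G.commonNeighbors x y).ncard : ℝ),
       fun x y => by dsimp only; rw [SimpleGraph.commonNeighbors_symm]⟩ ed) / (G.edgeFinset.card : ℝ)

lemma adjPowCast [Fintype V] [DecidableEq V] (G : SimpleGraph V) (ℓ : ℕ) :
    ((G.adjMatrix ℕ) ^ ℓ).map (Nat.cast : ℕ → ℝ) = (G.adjMatrix ℝ) ^ ℓ := by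
  have h0 : (G.adjMatrix ℕ).map (Nat.cast : ℕ → ℝ) = G.adjMatrix ℝ := by
    ext i j; simp
  have := map_pow ((Nat.castRingHom ℝ).mapMatrix) (G.adjMatrix ℕ) ℓ
  simpa [RingHom.mapMatrix_apply, h0] using this

lemma mulself_common [Fintype V] [DecidableEq V] (G : SimpleGraph V) (x y : V) :
    (G.adjMatrix ℕ * G.adjMatrix ℕ) x y = Fintype.card (G.commonNeighbors x y) := by
  classical
  rw [SimpleGraph.adjMatrix_mul_apply]
  have h1 : ∑ u ∈ G.neighborFinset x, (G.adjMatrix ℕ) u y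
      = ((G.neighborFinset x).filter (fun u => G.Adj u y)).card := by
    simp [Finset.sum_boole]
  rw [h1]
  have h2 : ((G.neighborFinset x).filter (fun u => G.Adj u y))
      = Finset.univ.filter (fun u => G.Adj x u ∧ G.Adj y u) := by
    ext u
    simp only [Finset.mem_filter, SimpleGraph.mem_neighborFinset, Finset.mem_univ, true_and]
    exact ⟨fun ⟨h, h'⟩ => ⟨h, h'.symm⟩, fun ⟨h, h'⟩ => ⟨h, h'.symm⟩⟩
  rw [h2, ← Fintype.card_subtype]
  exact (Fintype.card_congr (Equiv.subtypeEquivRight (by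
    intro u; simp [SimpleGraph.mem_commonNeighbors]))).symm

lemma aeval_transpose [Fintype V] [DecidableEq V] (G : SimpleGraph V) (p : Polynomial ℝ) :
    ((Polynomial.aeval (G.adjMatrix ℝ)) p)ᵀ = (Polynomial.aeval (G.adjMatrix ℝ)) p := by
  induction p using Polynomial.induction_on' with
  | add p q hp hq => rw [map_add, Matrix.transpose_add, hp, hq]
  | monomial d r =>
      rw [Polynomial.aeval_monomial, Algebra.algebraMap_eq_smul_one]
      rw [Matrix.smul_mul, Matrix.one_mul, Matrix.transpose_smul, Matrix.transpose_pow,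
        SimpleGraph.transpose_adjMatrix]

/-- A 1-walk-regular graph (the number of walks of any fixed length `n`
between two vertices only depends on whether they are equal or adjacent) containing a regular
clique is strongly regular. -/
theorem stmt16 [Fintype V] (G : SimpleGraph V)
    (hwalk : ∀ n : ℕ,
      (∃ a : ℕ, ∀ x : V, (G.adjMatrix ℕ ^ n) x x = a) ∧
      (∃ b : ℕ, ∀ x y : V, G.Adj x y → (G.adjMatrix ℕ ^ n) x y = b))
    (hclq : ∃ (C : Finset V) (e : ℕ), IsRegularCliqueWith G C e) :
    ∃ n k l m : ℕ, G.IsSRGWith n k l m := by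
  classical
  obtain ⟨C, e, hCl, hepos, hEreg⟩ := hclq
  choose aN haN using fun n => (hwalk n).1
  choose bN hbN using fun n => (hwalk n).2
  set k : ℕ := aN 2 with hk
  set l : ℕ := bN 2 with hl
  -- regularity
  have hdeg : ∀ x : V, G.degree x = k := by
    intro x
    have := haN 2 x
    rw [pow_two, SimpleGraph.adjMatrix_mul_self_apply_self] at this
    exact this
  have hreg' : G.IsRegularOfDegree k := hdeg
  -- lambda
  have hlam : ∀ x y : V, G.Adj x y → Fintype.card (G.commonNeighbors x y) = l := by
    intro x y hxy
    have := hbN 2 x y hxy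
    rw [pow_two, mulself_common] at this
    exact this
  by_cases hcomp : ∀ x y : V, x ≠ y → G.Adj x y
  · exact ⟨Fintype.card V, k, l, 0, rfl, hdeg, hlam,
      fun v w hvw h => absurd (hcomp v w hvw) h⟩
  push_neg at hcomp
  obtain ⟨x₀, y₀, hx₀y₀, hnadj₀⟩ := hcomp
  -- basic facts about C
  have hCnu : ∃ z, z ∉ C := by
    by_contra h
    push_neg at h
    exact hnadj₀ (hCl (h x₀) (h y₀) hx₀y₀)
  obtain ⟨z₀, hz₀⟩ := hCnu
  have hCfz : 0 < (C.filter (fun y => G.Adj z₀ y)).card := by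
    rw [hEreg z₀ hz₀]; exact hepos
  have hCne : C.Nonempty := by
    obtain ⟨u, hu⟩ := Finset.card_pos.1 hCfz
    exact ⟨u, (Finset.mem_filter.1 hu).1⟩
  set c : ℕ := C.card with hc
  have hc1 : 1 ≤ c := Finset.card_pos.2 hCne
  -- c ≥ 2
  have hc2 : 2 ≤ c := by
    by_contra h
    push_neg at h
    have hcard1 : C.card = 1 := by omega
    obtain ⟨v, hv⟩ := Finset.card_eq_one.1 hcard1
    have hadjall : ∀ x : V, x ≠ v → G.Adj x v := by
      intro x hxv
      have hxC : x ∉ C := by rw [hv]; simp [hxv]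
      have hee := hEreg x hxC
      have hsub : (C.filter (fun y => G.Adj x y)) ⊆ C := Finset.filter_subset _ _
      have hle : (C.filter (fun y => G.Adj x y)).card ≤ 1 := by
        calc (C.filter (fun y => G.Adj x y)).card ≤ C.card := Finset.card_le_card hsub
        _ = 1 := hcard1
      have he1 : e = 1 := by omega
      have hfc : (C.filter (fun y => G.Adj x y)) = C := by
        apply Finset.eq_of_subset_of_card_le hsub
        rw [hee, he1, hcard1]
      have hvmem : v ∈ C.filter (fun y => G.Adj x y) := by
        rw [hfc, hv]; exact Finset.mem_singleton_self v
      exact (Finset.mem_filter.1 hvmem).2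
    have hdegv : G.degree v = Fintype.card V - 1 := by
      have hnb : G.neighborFinset v = Finset.univ.erase v := by
        ext u
        simp only [SimpleGraph.mem_neighborFinset, Finset.mem_erase, Finset.mem_univ, and_true]
        exact ⟨fun h => h.ne', fun h => (hadjall u h).symm⟩
      rw [SimpleGraph.degree, hnb, Finset.card_erase_of_mem (Finset.mem_univ v),
        Finset.card_univ]
    have hkn : k = Fintype.card V - 1 := by rw [← hdeg v, hdegv]
    have hnbx : G.neighborFinset x₀ = Finset.univ.erase x₀ := by
      apply Finset.eq_of_subset_of_card_le
      · intro u hu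
        simp only [Finset.mem_erase, Finset.mem_univ, and_true]
        exact (SimpleGraph.mem_neighborFinset _ _ _ |>.1 hu).ne'
      · rw [Finset.card_erase_of_mem (Finset.mem_univ x₀), Finset.card_univ,
          ← SimpleGraph.degree, hdeg x₀, hkn]
    have hy₀ : y₀ ∈ G.neighborFinset x₀ := by
      rw [hnbx]; exact Finset.mem_erase.2 ⟨hx₀y₀.symm, Finset.mem_univ y₀⟩
    exact hnadj₀ ((SimpleGraph.mem_neighborFinset _ _ _).1 hy₀)
  -- ====== setup over ℝ ======
  have hcn : c < Fintype.card V := by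
    apply Finset.card_lt_card
    exact ⟨Finset.subset_univ C, fun h => hz₀ (h (Finset.mem_univ z₀))⟩
  set n : ℕ := Fintype.card V with hn
  have hnpos : 0 < n := lt_of_le_of_lt (Nat.zero_le c) hcn
  set A : Matrix V V ℝ := G.adjMatrix ℝ with hA
  have hdiagR : ∀ (ℓ : ℕ) (x : V), (A ^ ℓ) x x = (aN ℓ : ℝ) := by
    intro ℓ x
    rw [hA, ← adjPowCast]
    simp [Matrix.map_apply, haN ℓ x]
  have hedgeR : ∀ (ℓ : ℕ) (x y : V), G.Adj x y → (A ^ ℓ) x y = (bN ℓ : ℝ) := by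
    intro ℓ x y hxy
    rw [hA, ← adjPowCast]
    simp [Matrix.map_apply, hbN ℓ x y hxy]
  set χ : V → ℝ := fun x => if x ∈ C then 1 else 0 with hχ
  set one : V → ℝ := fun _ => 1 with hone
  set wv : V → ℝ := fun x => if x ∈ C then ((n : ℝ) - c) else -(c : ℝ) with hwv
  -- A 1 = k 1
  have hAone : A *ᵥ one = (k : ℝ) • one := by
    funext x
    rw [hA]
    rw [SimpleGraph.adjMatrix_mulVec_apply]
    simp [hone, hdeg x]
  -- A χ
  have hAchi : ∀ x : V, (A *ᵥ χ) x = if x ∈ C then ((c : ℝ) - 1) else (e : ℝ) := by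
    intro x
    rw [hA, SimpleGraph.adjMatrix_mulVec_apply]
    have h2 : (G.neighborFinset x).filter (fun u => u ∈ C) = C.filter (fun u => G.Adj x u) := by
      ext u
      simp only [Finset.mem_filter, SimpleGraph.mem_neighborFinset]
      tauto
    have h1 : ∑ u ∈ G.neighborFinset x, χ u
        = ((C.filter (fun u => G.Adj x u)).card : ℝ) := by
      simp only [hχ]
      rw [Finset.sum_boole, h2]
    rw [h1]
    by_cases hxC : x ∈ C
    · have h3 : C.filter (fun u => G.Adj x u) = C.erase x := by
        ext u
        simp only [Finset.mem_filter, Finset.mem_erase]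
        constructor
        · rintro ⟨huC, hadj⟩; exact ⟨hadj.ne', huC⟩
        · rintro ⟨hne, huC⟩; exact ⟨huC, hCl hxC huC (Ne.symm hne)⟩
      rw [h3, Finset.card_erase_of_mem hxC, if_pos hxC, Nat.cast_sub hc1, Nat.cast_one]
    · rw [hEreg x hxC, if_neg hxC]
  -- sum computations
  have hchisum : ∑ u : V, χ u = (c : ℝ) := by
    have : Finset.univ.filter (fun u : V => u ∈ C) = C := by
      ext u; simp
    simp [hχ, Finset.sum_boole, this]
    exact hc.symm
  have hsum1 : ∑ x : V, (A *ᵥ χ) x = (k : ℝ) * c := by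
    have hcol : ∀ u : V, ∑ x : V, A x u = (k : ℝ) := by
      intro u
      have hflt : (Finset.univ.filter (fun x : V => G.Adj x u)) = G.neighborFinset u := by
        ext x; simp [SimpleGraph.mem_neighborFinset, SimpleGraph.adj_comm]
      rw [hA]
      simp only [SimpleGraph.adjMatrix_apply]
      rw [Finset.sum_boole, hflt, SimpleGraph.card_neighborFinset_eq_degree, hdeg u]
    calc ∑ x : V, (A *ᵥ χ) x = ∑ x : V, ∑ u : V, A x u * χ u := by
          simp [Matrix.mulVec, dotProduct]
    _ = ∑ u : V, ∑ x : V, A x u * χ u := Finset.sum_comm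
    _ = ∑ u : V, (∑ x : V, A x u) * χ u := by simp [Finset.sum_mul]
    _ = ∑ u : V, (k : ℝ) * χ u := by
          apply Finset.sum_congr rfl; intro u _; rw [hcol u]
    _ = (k : ℝ) * ∑ u : V, χ u := by rw [Finset.mul_sum]
    _ = (k : ℝ) * c := by rw [hchisum]
  have hsum2 : ∑ x : V, (A *ᵥ χ) x = (c : ℝ) * ((c : ℝ) - 1) + ((n : ℝ) - c) * e := by
    have h1 : ∀ x : V, (A *ᵥ χ) x = if x ∈ C then ((c : ℝ) - 1) else (e : ℝ) := hAchi
    rw [Finset.sum_congr rfl (fun x _ => h1 x), Finset.sum_ite]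
    have hu1 : Finset.univ.filter (fun u : V => u ∈ C) = C := by ext u; simp
    have hu2 : (Finset.univ.filter (fun u : V => ¬(u ∈ C))).card = n - c := by
      have : Finset.univ.filter (fun u : V => ¬(u ∈ C)) = Cᶜ := by
        ext u; simp
      rw [this, Finset.card_compl]
    rw [hu1]
    rw [Finset.sum_const, Finset.sum_const, hu2]
    rw [nsmul_eq_mul, nsmul_eq_mul, Nat.cast_sub (le_of_lt hcn)]
  have hE3 : (e : ℝ) * ((n : ℝ) - c) = (c : ℝ) * ((k : ℝ) - c + 1) := by
    have h := hsum1.symm.trans hsum2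
    linear_combination -h
  set sR : ℝ := (c : ℝ) - 1 - e with hsR
  -- A w = s w
  have hwdef : ∀ u : V, wv u = (n : ℝ) * χ u - (c : ℝ) * one u := by
    intro u
    by_cases huC : u ∈ C <;> simp [hwv, hχ, hone, huC]
  have hAw : A *ᵥ wv = sR • wv := by
    funext x
    have h1 : (A *ᵥ wv) x = (n : ℝ) * (A *ᵥ χ) x - (c : ℝ) * (A *ᵥ one) x := by
      have : wv = (fun u => (n : ℝ) * χ u - (c : ℝ) * one u) := funext hwdef
      rw [this]
      simp [Matrix.mulVec, dotProduct, mul_sub, Finset.sum_sub_distrib,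
        Finset.mul_sum]
      congr 1 <;> [skip; skip] <;> apply Finset.sum_congr rfl <;> intro u _ <;> ring
    rw [h1, hAone, hAchi x]
    by_cases hxC : x ∈ C
    · simp only [hwv, Pi.smul_apply, smul_eq_mul, if_pos hxC, hone]
      linear_combination hE3
    · simp only [hwv, Pi.smul_apply, smul_eq_mul, if_neg hxC, hone]
      linear_combination hE3
  have hAwpow : ∀ ℓ : ℕ, (A ^ ℓ) *ᵥ wv = (sR ^ ℓ) • wv := by
    intro ℓ
    induction ℓ with
    | zero => simp [Matrix.one_mulVec]
    | succ d ih =>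
        have hst : A ^ (d + 1) *ᵥ wv = A *ᵥ (A ^ d *ᵥ wv) := by
          rw [Matrix.mulVec_mulVec, ← pow_succ']
        rw [hst, ih, Matrix.mulVec_smul, hAw, smul_smul, ← pow_succ]
  have hAonepow : ∀ ℓ : ℕ, (A ^ ℓ) *ᵥ one = ((k : ℝ) ^ ℓ) • one := by
    intro ℓ
    induction ℓ with
    | zero => simp [Matrix.one_mulVec]
    | succ d ih =>
        have hst : A ^ (d + 1) *ᵥ one = A *ᵥ (A ^ d *ᵥ one) := by
          rw [Matrix.mulVec_mulVec, ← pow_succ']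
        rw [hst, ih, Matrix.mulVec_smul, hAone, smul_smul, ← pow_succ]
  obtain ⟨x₁, hx₁⟩ := hCne
  -- key scalar identity
  have hkey : ∀ ℓ : ℕ, (n : ℝ) * ((aN ℓ : ℝ) + ((c : ℝ) - 1) * (bN ℓ : ℝ))
      = ((n : ℝ) - c) * sR ^ ℓ + (c : ℝ) * (k : ℝ) ^ ℓ := by
    intro ℓ
    have h1 : ((A ^ ℓ) *ᵥ χ) x₁ = (aN ℓ : ℝ) + ((c : ℝ) - 1) * (bN ℓ : ℝ) := by
      have e1 : ((A ^ ℓ) *ᵥ χ) x₁ = ∑ u ∈ C, (A ^ ℓ) x₁ u := by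
        rw [Matrix.mulVec, dotProduct]
        simp only [hχ, mul_ite, mul_one, mul_zero]
        rw [Finset.sum_ite_mem, Finset.univ_inter]
      rw [e1, ← Finset.add_sum_erase C _ hx₁]
      have e2 : ∑ u ∈ C.erase x₁, (A ^ ℓ) x₁ u = ∑ u ∈ C.erase x₁, (bN ℓ : ℝ) := by
        apply Finset.sum_congr rfl
        intro u hu
        obtain ⟨hne, huC⟩ := Finset.mem_erase.1 hu
        exact hedgeR ℓ x₁ u (hCl hx₁ huC (Ne.symm hne))
      rw [e2, Finset.sum_const, Finset.card_erase_of_mem hx₁, nsmul_eq_mul,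
        Nat.cast_sub hc1, Nat.cast_one, hdiagR ℓ x₁]
    have h2 : ((A ^ ℓ) *ᵥ ((n : ℝ) • χ)) x₁ = (n : ℝ) * (((A ^ ℓ) *ᵥ χ) x₁) := by
      rw [Matrix.mulVec_smul]; simp
    have h3 : (n : ℝ) • χ = wv + (c : ℝ) • one := by
      funext u
      have := hwdef u
      simp only [Pi.add_apply, Pi.smul_apply, smul_eq_mul]
      linarith [hwdef u]
    have h4 : ((A ^ ℓ) *ᵥ ((n : ℝ) • χ)) x₁ = ((n : ℝ) - c) * sR ^ ℓ + (c : ℝ) * (k : ℝ) ^ ℓ := by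
      rw [h3, Matrix.mulVec_add, Matrix.mulVec_smul, hAwpow ℓ, hAonepow ℓ]
      simp only [Pi.add_apply, Pi.smul_apply, smul_eq_mul, hwv, hone, if_pos hx₁]
      ring
    rw [← h1, ← h2, h4]
  -- trace identities
  set T : Matrix V V ℝ := (k : ℝ) • (1 : Matrix V V ℝ) + ((c : ℝ) - 1) • A with hT
  have htr1 : ∀ ℓ : ℕ, Matrix.trace (A ^ ℓ) = (n : ℝ) * (aN ℓ : ℝ) := by
    intro ℓ
    rw [Matrix.trace]
    rw [show Matrix.diag (A ^ ℓ) = fun x => (A ^ ℓ) x x from rfl]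
    rw [Finset.sum_congr rfl (fun x _ => hdiagR ℓ x), Finset.sum_const, nsmul_eq_mul]
    rw [Finset.card_univ, ← hn]
  have htr2 : ∀ ℓ : ℕ, Matrix.trace (A ^ ℓ * A) = (n : ℝ) * ((k : ℝ) * (bN ℓ : ℝ)) := by
    intro ℓ
    have hx : ∀ x : V, (A ^ ℓ * A) x x = (k : ℝ) * (bN ℓ : ℝ) := by
      intro x
      rw [hA, SimpleGraph.mul_adjMatrix_apply]
      rw [Finset.sum_congr rfl (fun u hu => hedgeR ℓ x u ((SimpleGraph.mem_neighborFinset _ _ _).1 hu))]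
      rw [Finset.sum_const, SimpleGraph.card_neighborFinset_eq_degree, hdeg x, nsmul_eq_mul]
    rw [Matrix.trace]
    rw [show Matrix.diag (A ^ ℓ * A) = fun x => (A ^ ℓ * A) x x from rfl]
    rw [Finset.sum_congr rfl (fun x _ => hx x), Finset.sum_const, nsmul_eq_mul,
      Finset.card_univ, ← hn]
  have hTkey : ∀ ℓ : ℕ, (n : ℝ) * Matrix.trace (A ^ ℓ * T)
      = (n : ℝ) * (k : ℝ) * (((n : ℝ) - c) * sR ^ ℓ + (c : ℝ) * (k : ℝ) ^ ℓ) := by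
    intro ℓ
    rw [hT, Matrix.mul_add, Matrix.mul_smul, Matrix.mul_smul, mul_one,
      Matrix.trace_add, Matrix.trace_smul, Matrix.trace_smul, htr1 ℓ, htr2 ℓ]
    have := hkey ℓ
    simp only [smul_eq_mul]
    linear_combination ((n : ℝ) * (k : ℝ)) * this
  -- polynomial master identity
  have hmaster : ∀ p : Polynomial ℝ, (n : ℝ) * Matrix.trace ((Polynomial.aeval A) p * T)
      = (n : ℝ) * (k : ℝ) * (((n : ℝ) - c) * Polynomial.eval sR p
        + (c : ℝ) * Polynomial.eval (k : ℝ) p) := by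
    intro p
    induction p using Polynomial.induction_on' with
    | add p q hp hq =>
        rw [map_add, Matrix.add_mul, Matrix.trace_add, Polynomial.eval_add, Polynomial.eval_add]
        linear_combination hp + hq
    | monomial d r =>
        rw [Polynomial.aeval_monomial, Algebra.algebraMap_eq_smul_one, Matrix.smul_mul,
          one_mul, Matrix.smul_mul, Matrix.trace_smul, Polynomial.eval_monomial,
          Polynomial.eval_monomial]
        simp only [smul_eq_mul]
        linear_combination r * hTkey d
  -- eliminate other eigenvalues
  have hcR1 : ((c : ℝ) - 1) ≠ 0 := by
    have : (2 : ℝ) ≤ (c : ℝ) := by exact_mod_cast hc2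
    linarith
  have hnne : (n : ℝ) ≠ 0 := by
    have : (0 : ℝ) < n := by exact_mod_cast hnpos
    linarith
  set tR : ℝ := -(k : ℝ) / ((c : ℝ) - 1) with htR
  set p₁ : Polynomial ℝ := (Polynomial.X - Polynomial.C sR) ^ 2 * (Polynomial.X - Polynomial.C tR)
      * (Polynomial.X - Polynomial.C (k : ℝ)) ^ 2 with hp₁
  have hp1s : Polynomial.eval sR p₁ = 0 := by simp [hp₁]
  have hp1k : Polynomial.eval (k : ℝ) p₁ = 0 := by simp [hp₁]
  have htr0 : Matrix.trace ((Polynomial.aeval A) p₁ * T) = 0 := by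
    have h := hmaster p₁
    rw [hp1s, hp1k] at h
    have h2 : (n : ℝ) * Matrix.trace ((Polynomial.aeval A) p₁ * T) = 0 := by
      rw [h]; ring
    exact (mul_eq_zero.mp h2).resolve_left hnne
  have hTfact : T = ((c : ℝ) - 1) • (A - tR • (1 : Matrix V V ℝ)) := by
    have hct : ((c : ℝ) - 1) * tR = -(k : ℝ) := by
      rw [htR]; field_simp
    rw [hT, smul_sub, smul_smul, hct, neg_smul, sub_neg_eq_add, add_comm]
  set m' : Polynomial ℝ := ((Polynomial.X - Polynomial.C sR) * (Polynomial.X - Polynomial.C tR))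
      * (Polynomial.X - Polynomial.C (k : ℝ)) with hm'def
  set M' : Matrix V V ℝ := (Polynomial.aeval A) m' with hM'
  have haevt : (Polynomial.aeval A) (Polynomial.X - Polynomial.C tR) = A - tR • 1 := by
    rw [map_sub, Polynomial.aeval_X, Polynomial.aeval_C, Algebra.algebraMap_eq_smul_one]
  have htrM : Matrix.trace (M' * M') = 0 := by
    have h1 : (Polynomial.aeval A) p₁ * T
        = ((c : ℝ) - 1) • ((Polynomial.aeval A) (p₁ * (Polynomial.X - Polynomial.C tR))) := by
      rw [hTfact, Matrix.mul_smul, ← haevt, ← _root_.map_mul]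
    have h2 : p₁ * (Polynomial.X - Polynomial.C tR) = m' * m' := by
      rw [hp₁, hm'def]; ring
    rw [h1, h2, _root_.map_mul, ← hM', Matrix.trace_smul] at htr0
    have := htr0
    simp only [smul_eq_mul] at this
    exact (mul_eq_zero.mp this).resolve_left hcR1
  have hM'sym : M'ᵀ = M' := by rw [hM', hA]; exact aeval_transpose G m'
  have hM'zero : M' = 0 := by
    have hent : ∀ x u : V, M' u x = M' x u := by
      intro x u
      conv_lhs => rw [← hM'sym]
      rw [Matrix.transpose_apply]
    have htr : Matrix.trace (M' * M') = ∑ x : V, ∑ u : V, (M' x u) ^ 2 := by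
      calc Matrix.trace (M' * M') = ∑ x : V, (M' * M') x x := rfl
      _ = ∑ x : V, ∑ u : V, M' x u * M' u x := by
            apply Finset.sum_congr rfl
            intro x _
            rw [Matrix.mul_apply]
      _ = ∑ x : V, ∑ u : V, (M' x u) ^ 2 := by
            apply Finset.sum_congr rfl
            intro x _
            apply Finset.sum_congr rfl
            intro u _
            rw [hent x u, ← sq]
    rw [htr] at htrM
    have hz : ∀ x ∈ Finset.univ, ∀ u ∈ (Finset.univ : Finset V), (M' x u) ^ 2 = 0 := by
      have h1 := (Finset.sum_eq_zero_iff_of_nonneg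
        (fun x _ => Finset.sum_nonneg (fun u _ => sq_nonneg _))).mp htrM
      intro x hx
      exact (Finset.sum_eq_zero_iff_of_nonneg (fun u _ => sq_nonneg _)).mp (h1 x hx)
    ext x u
    have := hz x (Finset.mem_univ x) u (Finset.mem_univ u)
    simpa using pow_eq_zero_iff (n := 2) (by norm_num) |>.mp this
  set q₂ : Polynomial ℝ := (Polynomial.X - Polynomial.C sR) * (Polynomial.X - Polynomial.C tR)
    with hq₂
  set M : Matrix V V ℝ := (Polynomial.aeval A) q₂ with hM
  have hMk : M * (A - (k : ℝ) • 1) = 0 := by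
    have : (Polynomial.aeval A) (Polynomial.X - Polynomial.C (k : ℝ))
        = A - (k : ℝ) • 1 := by
      rw [map_sub, Polynomial.aeval_X, Polynomial.aeval_C, Algebra.algebraMap_eq_smul_one]
    rw [hM, ← this, ← _root_.map_mul]
    rw [show q₂ * (Polynomial.X - Polynomial.C (k : ℝ)) = m' from by rw [hm'def, hq₂]]
    rw [← hM', hM'zero]
  have hMA : A * M = (k : ℝ) • M := by
    have h1 : M * A = (k : ℝ) • M := by
      have h2 : M * A - (k : ℝ) • M = 0 := by
        rw [← hMk, Matrix.mul_sub, Matrix.mul_smul, mul_one]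
      exact sub_eq_zero.mp h2
    have h3 : A * M = M * A := by
      have e1 : A * (Polynomial.aeval A) q₂ = (Polynomial.aeval A) (Polynomial.X * q₂) := by
        simp [_root_.map_mul]
      have e2 : (Polynomial.aeval A) q₂ * A = (Polynomial.aeval A) (q₂ * Polynomial.X) := by
        simp [_root_.map_mul]
      rw [hM, e1, e2, mul_comm Polynomial.X q₂]
    rw [h3, h1]
  -- constancy of k-eigenvectors
  have hvconst : ∀ v : V → ℝ, (∀ x : V, ∑ u ∈ G.neighborFinset x, v u = (k : ℝ) * v x) →
      ∀ x y : V, v x = v y := by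
    intro v hv
    obtain ⟨xm, -, hxm⟩ := Finset.exists_max_image Finset.univ v ⟨x₀, Finset.mem_univ x₀⟩
    have hle : ∀ x : V, v x ≤ v xm := fun x => hxm x (Finset.mem_univ x)
    have hstep : ∀ x : V, v x = v xm → ∀ y : V, G.Adj x y → v y = v xm := by
      intro x hx y hxy
      by_contra hne
      have hlt : v y < v xm := lt_of_le_of_ne (hle y) hne
      have h1 : ∑ u ∈ G.neighborFinset x, v u < ∑ u ∈ G.neighborFinset x, v xm := by
        apply Finset.sum_lt_sum (fun i _ => hle i)
        exact ⟨y, (SimpleGraph.mem_neighborFinset _ _ _).2 hxy, hlt⟩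
      rw [hv x, hx, Finset.sum_const, SimpleGraph.card_neighborFinset_eq_degree,
        hdeg x, nsmul_eq_mul] at h1
      exact lt_irrefl _ h1
    have hCm : ∃ u ∈ C, v u = v xm := by
      by_cases hxmC : xm ∈ C
      · exact ⟨xm, hxmC, rfl⟩
      · have hpos : 0 < (C.filter (fun y => G.Adj xm y)).card := by
          rw [hEreg xm hxmC]; exact hepos
        obtain ⟨u, hu⟩ := Finset.card_pos.1 hpos
        obtain ⟨huC, hadj⟩ := Finset.mem_filter.1 hu
        exact ⟨u, huC, hstep xm rfl u hadj⟩
    obtain ⟨u₀, hu₀C, hu₀⟩ := hCm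
    have hallC : ∀ u ∈ C, v u = v xm := by
      intro u huC
      by_cases h : u = u₀
      · rw [h]; exact hu₀
      · exact hstep u₀ hu₀ u (hCl hu₀C huC (fun he => h he.symm))
    have hall : ∀ x : V, v x = v xm := by
      intro x
      by_cases hxC : x ∈ C
      · exact hallC x hxC
      · have hpos : 0 < (C.filter (fun y => G.Adj x y)).card := by
          rw [hEreg x hxC]; exact hepos
        obtain ⟨u, hu⟩ := Finset.card_pos.1 hpos
        obtain ⟨huC, hadj⟩ := Finset.mem_filter.1 hu
        exact hstep u (hallC u huC) x hadj.symm
    intro x y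
    rw [hall x, hall y]
  -- the matrix M has constant entries
  have hMcol : ∀ y x x' : V, M x y = M x' y := by
    intro y x x'
    apply hvconst (fun i => M i y) _ x x'
    intro z
    have h1 : ∑ u ∈ G.neighborFinset z, M u y = (G.adjMatrix ℝ * M) z y := by
      rw [SimpleGraph.adjMatrix_mul_apply]
    have h2 : (G.adjMatrix ℝ * M) z y = (k : ℝ) * M z y := by
      rw [← hA, hMA]
      simp
    rw [h1, h2]
  have hMsym : ∀ x y : V, M x y = M y x := by
    intro x y
    have hs : Mᵀ = M := by rw [hM, hA]; exact aeval_transpose G q₂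
    conv_rhs => rw [← hs]
    rw [Matrix.transpose_apply]
  have hMconst : ∀ x y x' y' : V, M x y = M x' y' := by
    intro x y x' y'
    calc M x y = M x' y := hMcol y x x'
    _ = M y x' := hMsym x' y
    _ = M y' x' := hMcol x' y y'
    _ = M x' y' := hMsym y' x'
  -- entries of M at nonadjacent distinct pairs
  have hexpand : M = A * A - tR • A - (sR • A - (sR * tR) • (1 : Matrix V V ℝ)) := by
    have hfs : (Polynomial.aeval A) (Polynomial.X - Polynomial.C sR) = A - sR • 1 := by
      rw [map_sub, Polynomial.aeval_X, Polynomial.aeval_C, Algebra.algebraMap_eq_smul_one]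
    have h1 : (Polynomial.aeval A) q₂ = (A - sR • 1) * (A - tR • 1) := by
      rw [hq₂, _root_.map_mul, hfs, haevt]
    rw [hM, h1, Matrix.sub_mul, Matrix.mul_sub, Matrix.mul_sub]
    simp only [Matrix.smul_mul, Matrix.mul_smul, one_mul, mul_one, smul_smul]
    rw [mul_comm tR sR]
  have hMentry : ∀ x y : V, x ≠ y → ¬G.Adj x y → M x y = (A * A) x y := by
    intro x y hne hnadj
    rw [hexpand]
    simp only [Matrix.sub_apply, Matrix.smul_apply, smul_eq_mul]
    rw [show A x y = 0 from by rw [hA]; simp [hnadj]]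
    rw [Matrix.one_apply_ne hne]
    ring
  -- conclusion
  have hAA : ∀ x y : V, (A * A) x y = (Fintype.card (G.commonNeighbors x y) : ℝ) := by
    intro x y
    have h1 : ((G.adjMatrix ℕ ^ 2).map (Nat.cast : ℕ → ℝ)) x y = (G.adjMatrix ℝ ^ 2) x y := by
      rw [adjPowCast]
    rw [Matrix.map_apply] at h1
    rw [pow_two, pow_two, mulself_common] at h1
    rw [hA]
    exact h1.symm
  refine ⟨n, k, l, Fintype.card (G.commonNeighbors x₀ y₀), hn.symm, hreg', hlam, ?_⟩
  intro v w2 hvw hnadj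
  have h1 : (Fintype.card (G.commonNeighbors v w2) : ℝ)
      = (Fintype.card (G.commonNeighbors x₀ y₀) : ℝ) := by
    rw [← hAA, ← hAA, ← hMentry v w2 hvw hnadj, ← hMentry x₀ y₀ hx₀y₀ hnadj₀]
    exact hMconst v w2 x₀ y₀
  exact_mod_cast h1
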